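/- Let T > 0, Δ ∈ ℝ, a₁ > 0, a₂ ∈ ℝ, b₁ ∈ ℝ, and define H(t,S,q) = q(S − Δ/2 − a₂) − (b₁/2 + a₁/(T−t)) q². For every (t,S,q) with 0 ≤ t < T and q ≥ 0, the supremum over ν ≥ 0 of the map ν ↦ −b₁ν ∂_S H(t,S,q) − ν ∂_q H(t,S,q) + (S − Δ/2 − a₁ν − a₂)ν is attained at ν* = q/(T−t); moreover, if q > 0 this maximizer is unique. -/

import Mathlib

/-- Value function for the optimal liquidation problem with linear temporary
price impact `f(ν) = a₁ν + a₂` and linear permanent price impact `g(ν) = b₁ν`. -/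
noncomputable def Hlin (T Δ a₁ a₂ b₁ : ℝ) (t S q : ℝ) : ℝ :=
  q * (S - Δ / 2 - a₂) - (b₁ / 2 + a₁ / (T - t)) * q ^ 2

/-- The Hamiltonian `ν ↦ −b₁ν ∂_S H − ν ∂_q H + (S − Δ/2 − a₁ν − a₂)ν`
appearing in the HJB equation, evaluated with the partial derivatives of `Hlin`. -/
noncomputable def HamLin (T Δ a₁ a₂ b₁ : ℝ) (t S q ν : ℝ) : ℝ :=
  -(b₁ * ν) * deriv (fun s => Hlin T Δ a₁ a₂ b₁ t s q) S
    - ν * deriv (fun p => Hlin T Δ a₁ a₂ b₁ t S p) q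
    + (S - Δ / 2 - a₁ * ν - a₂) * ν

lemma derivS (T Δ a₁ a₂ b₁ t S q : ℝ) :
    deriv (fun s => Hlin T Δ a₁ a₂ b₁ t s q) S = q := by
  have h : HasDerivAt (fun s => Hlin T Δ a₁ a₂ b₁ t s q) q S := by
    unfold Hlin
    have := (((hasDerivAt_id S).sub_const (Δ / 2)).sub_const a₂).const_mul q
    simpa using this.sub_const ((b₁ / 2 + a₁ / (T - t)) * q ^ 2)
  exact h.deriv

lemma derivQ (T Δ a₁ a₂ b₁ t S q : ℝ) :
    deriv (fun p => Hlin T Δ a₁ a₂ b₁ t S p) q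
      = (S - Δ / 2 - a₂) - (b₁ + 2 * a₁ / (T - t)) * q := by
  have h : HasDerivAt (fun p => Hlin T Δ a₁ a₂ b₁ t S p)
      ((S - Δ / 2 - a₂) - (b₁ + 2 * a₁ / (T - t)) * q) q := by
    unfold Hlin
    have h1 : HasDerivAt (fun p : ℝ => p * (S - Δ / 2 - a₂)) (S - Δ / 2 - a₂) q :=
      by simpa using (hasDerivAt_id q).mul_const (S - Δ / 2 - a₂)
    have h2 : HasDerivAt (fun p : ℝ => (b₁ / 2 + a₁ / (T - t)) * p ^ 2)
        ((b₁ / 2 + a₁ / (T - t)) * (2 * q)) q := by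
      simpa using ((hasDerivAt_pow 2 q).const_mul (b₁ / 2 + a₁ / (T - t)))
    have := h1.sub h2
    refine this.congr_deriv ?_
    ring
  exact h.deriv

lemma hamEq (T Δ a₁ a₂ b₁ t S q ν : ℝ) :
    HamLin T Δ a₁ a₂ b₁ t S q ν = a₁ * (2 * ν * q / (T - t) - ν ^ 2) := by
  unfold HamLin
  rw [derivS, derivQ]
  ring

theorem stmt_1 (T Δ a₁ a₂ b₁ : ℝ) (hT : 0 < T) (ha₁ : 0 < a₁)
    (t S q : ℝ) (ht0 : 0 ≤ t) (htT : t < T) (hq : 0 ≤ q) :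
    0 ≤ q / (T - t)
    ∧ (∀ ν : ℝ, 0 ≤ ν → HamLin T Δ a₁ a₂ b₁ t S q ν ≤ HamLin T Δ a₁ a₂ b₁ t S q (q / (T - t)))
    ∧ (0 < q → ∀ ν : ℝ, 0 ≤ ν →
        HamLin T Δ a₁ a₂ b₁ t S q ν = HamLin T Δ a₁ a₂ b₁ t S q (q / (T - t)) →
        ν = q / (T - t)) := by
  have hτ : 0 < T - t := by linarith
  have hτ' : (T - t) ≠ 0 := ne_of_gt hτ
  have key : ∀ ν : ℝ, HamLin T Δ a₁ a₂ b₁ t S q (q / (T - t)) - HamLin T Δ a₁ a₂ b₁ t S q ν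
      = a₁ * (ν - q / (T - t)) ^ 2 := by
    intro ν
    rw [hamEq, hamEq]
    field_simp
    ring
  refine ⟨div_nonneg hq hτ.le, fun ν _ => ?_, fun _ ν _ heq => ?_⟩
  · nlinarith [key ν, sq_nonneg (ν - q / (T - t))]
  · have := key ν
    rw [heq, sub_self] at this
    have : (ν - q / (T - t)) ^ 2 = 0 := by
      have := this.symm
      nlinarith
    have := pow_eq_zero_iff (n := 2) (by norm_num) |>.mp this
    linarith
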